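/- Let α, g, h, K be positive real constants, let x_g be the unique solution in (0,∞) of (g·h/α)·(1 − e^{−αx}) = g·h·x − K·α, and set w* := g·h·x_g/α − K. For θ ∈ [0,∞), x ∈ [0,∞) and w ∈ ℝ define B(θ,x,w) := K·e^{−αθ} + (g·h·x/α)·(1 − e^{−αθ}) + g·h·(1/α² − e^{−αθ}/α² − (θ/α)·e^{−αθ}) + e^{−αθ}·w, and B(∞,x,w) := g·h·x/α + g·h/α². Define W : [0,∞) → ℝ by W(x) := B(x_g − x, x, w*) for 0 ≤ x ≤ x_g and W(x) := K + w* for x > x_g. Then W(0) = w*, and for every x ∈ [0,∞): W(x) = inf_{θ ∈ [0,∞]} B(θ, x, w*), and this infimum is attained at θ = max{x_g − x, 0} and at no other θ ∈ [0,∞]. -/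

import Mathlib

open Filter
open scoped NNReal ENNReal Topology

/-- The Bellman increment `B(θ, x, w)` for finite `θ ∈ [0,∞)`:
`B(θ,x,w) = K e^{-αθ} + (ghx/α)(1 - e^{-αθ}) + gh(1/α² - e^{-αθ}/α² - (θ/α)e^{-αθ})
+ e^{-αθ} w`. -/
noncomputable def Bfin (α g h K θ x w : ℝ) : ℝ :=
  K * Real.exp (-α * θ) +
    g * h * x / α * (1 - Real.exp (-α * θ)) +
    g * h * (1 / α ^ 2 - Real.exp (-α * θ) / α ^ 2 - (θ / α) * Real.exp (-α * θ)) +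
    Real.exp (-α * θ) * w

/-- The extension of `B(·, x, w)` to `[0,∞]` (realized as `ℝ≥0∞`), with
`B(∞,x,w) := ghx/α + gh/α²`. -/
noncomputable def Bext (α g h K : ℝ) (θ : ℝ≥0∞) (x w : ℝ) : ℝ :=
  if θ = ∞ then g * h * x / α + g * h / α ^ 2 else Bfin α g h K θ.toReal x w

/-- The Bellman function `W` of the fluid-queue example:
`W(x) = B(x_g - x, x, w*)` for `0 ≤ x ≤ x_g`, and `W(x) = K + w*` for `x > x_g`,
where `w* = g·h·x_g/α - K`. -/
noncomputable def Wfun (α g h K xg x : ℝ) : ℝ :=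
  if x ≤ xg then Bfin α g h K (xg - x) x (g * h * xg / α - K)
  else K + (g * h * xg / α - K)

/-- Auxiliary function `ψ(t) = e^{-αt}(1/α - m + t)`; then
`B(θ,x,w*) = L - (gh/α) ψ(θ)` with `m = x_g - x` and `L = B(∞)`. -/
noncomputable def psiA (α m t : ℝ) : ℝ := Real.exp (-α * t) * (1/α - m + t)

lemma psiA_hasDeriv (α m t : ℝ) (hα : α ≠ 0) :
    HasDerivAt (psiA α m) (Real.exp (-α * t) * (α * (m - t))) t := by
  have h1 : HasDerivAt (fun t : ℝ => Real.exp (-α * t)) (-α * Real.exp (-α * t)) t := by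
    have := ((hasDerivAt_id t).const_mul (-α)).exp
    simpa [mul_comm] using this
  have h2 : HasDerivAt (fun t : ℝ => 1/α - m + t) 1 t := by
    simpa using (hasDerivAt_id t).const_add (1/α - m)
  have := h1.mul h2
  convert this using 1
  · rfl
  · rfl
  · rfl
  field_simp
  ring

/-- `ψ` attains its strict maximum over `[0,∞)` at `max m 0`. -/
lemma psiA_lt (α m : ℝ) (hα : 0 < α) (t : ℝ) (ht : 0 ≤ t) (hne : t ≠ max m 0) :
    psiA α m t < psiA α m (max m 0) := by
  set s := max m 0 with hs
  have hcont : Continuous (psiA α m) := by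
    unfold psiA; continuity
  have hderiv : ∀ u : ℝ, deriv (psiA α m) u = Real.exp (-α * u) * (α * (m - u)) :=
    fun u => (psiA_hasDeriv α m u hα.ne').deriv
  rcases lt_or_gt_of_ne hne with hlt | hgt
  · have hspos : 0 < s := lt_of_le_of_lt ht hlt
    have hsm : s = m := by
      rcases max_cases m 0 with ⟨h1, _⟩ | ⟨h1, _⟩
      · exact h1
      · rw [hs, h1] at hspos; exact absurd hspos (lt_irrefl 0)
    have hmono : StrictMonoOn (psiA α m) (Set.Icc 0 s) := by
      apply strictMonoOn_of_deriv_pos (convex_Icc 0 s) hcont.continuousOn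
      intro u hu
      rw [interior_Icc] at hu
      rw [hderiv]
      have : 0 < m - u := by rw [← hsm]; linarith [hu.2]
      positivity
    exact hmono ⟨ht, hlt.le⟩ ⟨ht.trans hlt.le, le_refl s⟩ hlt
  · have hanti : StrictAntiOn (psiA α m) (Set.Ici s) := by
      apply strictAntiOn_of_deriv_neg (convex_Ici s) hcont.continuousOn
      intro u hu
      rw [interior_Ici] at hu
      rw [hderiv]
      have hum : m - u < 0 := by
        have h1 : m ≤ s := le_max_left m 0
        have : m < u := lt_of_le_of_lt h1 hu
        linarith
      have he : 0 < Real.exp (-α * u) := Real.exp_pos _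
      have : α * (m - u) < 0 := mul_neg_of_pos_of_neg hα hum
      nlinarith
    exact hanti (Set.self_mem_Ici) (Set.mem_Ici.mpr hgt.le) hgt

/-- Closed form of `B(θ, x, w*)` in terms of `ψ`. -/
lemma Bfin_eq (α g h K xg x θ : ℝ) (hα : α ≠ 0) :
    Bfin α g h K θ x (g * h * xg / α - K)
      = (g * h * x / α + g * h / α ^ 2) - g * h / α * psiA α (xg - x) θ := by
  unfold Bfin psiA
  field_simp
  ring

/-- Closed form of `W(x)` in terms of `ψ`. -/
lemma Wfun_eq (α g h K xg x : ℝ) (hα : α ≠ 0) :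
    Wfun α g h K xg x
      = (g * h * x / α + g * h / α ^ 2) - g * h / α * psiA α (xg - x) (max (xg - x) 0) := by
  unfold Wfun
  split_ifs with hx
  · rw [Bfin_eq α g h K xg x _ hα, max_eq_left (by linarith)]
  · push_neg at hx
    rw [max_eq_right (by linarith)]
    unfold psiA
    rw [mul_zero, Real.exp_zero]
    field_simp
    ring

/-- Let `α, g, h, K > 0`, let `x_g` be the unique solution in
`(0,∞)` of `(gh/α)(1 - e^{-αx}) = ghx - Kα`, and set `w* = g·h·x_g/α - K`.  Then
`W(0) = w*`, and for every `x ≥ 0`, `W(x) = inf_{θ ∈ [0,∞]} B(θ, x, w*)`, the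
infimum being attained exactly at `θ = max{x_g - x, 0}`. -/
theorem stmt13 (α g h K xg : ℝ) (hα : 0 < α) (hg : 0 < g) (hh : 0 < h) (hK : 0 < K)
    (hxg : 0 < xg)
    (hxgeq : g * h / α * (1 - Real.exp (-α * xg)) = g * h * xg - K * α) :
    Wfun α g h K xg 0 = g * h * xg / α - K ∧
    ∀ x : ℝ, 0 ≤ x →
      Wfun α g h K xg x
        = Bext α g h K (ENNReal.ofReal (max (xg - x) 0)) x (g * h * xg / α - K) ∧
      ∀ θ : ℝ≥0∞, θ ≠ ENNReal.ofReal (max (xg - x) 0) →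
        Wfun α g h K xg x < Bext α g h K θ x (g * h * xg / α - K) := by
  have hαne : α ≠ 0 := hα.ne'
  constructor
  · rw [Wfun_eq α g h K xg 0 hαne]
    rw [sub_zero, max_eq_left hxg.le]
    unfold psiA
    have : (1 / α - xg + xg) = 1 / α := by ring
    rw [this]
    field_simp
    field_simp at hxgeq
    linear_combination hxgeq
  · intro x hx
    set m := xg - x with hm
    set s := max m 0 with hs
    have hs0 : 0 ≤ s := le_max_right m 0
    have hBext_fin : ∀ θ : ℝ≥0∞, θ ≠ ∞ →
        Bext α g h K θ x (g * h * xg / α - K)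
          = (g * h * x / α + g * h / α ^ 2) - g * h / α * psiA α m θ.toReal := by
      intro θ hθ
      unfold Bext
      rw [if_neg hθ, Bfin_eq α g h K xg x _ hαne]
    have hW : Wfun α g h K xg x
        = (g * h * x / α + g * h / α ^ 2) - g * h / α * psiA α m s :=
      Wfun_eq α g h K xg x hαne
    have hc : 0 < g * h / α := by positivity
    constructor
    · rw [hW, hBext_fin _ ENNReal.ofReal_ne_top, ENNReal.toReal_ofReal hs0]
    · intro θ hθ
      by_cases hθtop : θ = ∞
      · subst hθtop
        unfold Bext
        rw [if_pos rfl, hW]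
        have hpsi_pos : 0 < psiA α m s := by
          unfold psiA
          have h1 : 0 < 1 / α - m + s := by
            have : m ≤ s := le_max_left m 0
            have : 0 < 1 / α := by positivity
            linarith
          positivity
        nlinarith
      · rw [hW, hBext_fin θ hθtop]
        have ht0 : 0 ≤ θ.toReal := ENNReal.toReal_nonneg
        have htne : θ.toReal ≠ s := by
          intro hcon
          apply hθ
          rw [← ENNReal.ofReal_toReal hθtop, hcon]
        have := psiA_lt α m hα θ.toReal ht0 htne
        have := mul_lt_mul_of_pos_left this hc
        linarith
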